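/- arXiv:2012.10233 — 2 statements merged into one kernel-verified Lean document; each statement's English description precedes it below -/
import Mathlib

section
/- For p ∈ (0,1) and any real x < 0, the one-parameter Mittag-Leffler function satisfies M_p(x) ≤ 1, where M_p(x) = Σ_{k≥0} x^k / Γ(pk+1). -/
open Real MeasureTheory Set Filter Topology intervalIntegral

/-- One-parameter Mittag-Leffler function. -/
noncomputable def mittagLeffler (p x : ℝ) : ℝ :=
  ∑' k : ℕ, x ^ k / Real.Gamma (p * k + 1)

namespace MLaux

variable {p : ℝ}

/-- Gamma positivity helper -/
lemma G_pos (hp0 : 0 < p) (k : ℕ) : 0 < Real.Gamma (p * k + 1) :=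
  Real.Gamma_pos_of_pos (by positivity)

/-- log-convexity consequence: `Γ(x+1) ≤ Γ(x+p) * (x+p)^(1-p)` for `x > 0`. -/
lemma Gamma_ratio (hp0 : 0 < p) (hp1 : p < 1) {x : ℝ} (hx : 0 < x) :
    Real.Gamma (x + 1) ≤ Real.Gamma (x + p) * (x + p) ^ (1 - p) := by
  have hxp : (0:ℝ) < x + p := by linarith
  have h1 : x + 1 = p • (x + p) + (1 - p) • (x + 1 + p) := by
    simp only [smul_eq_mul]; ring
  have hc := Real.convexOn_log_Gamma.2 (Set.mem_Ioi.2 hxp)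
    (Set.mem_Ioi.2 (by linarith : (0:ℝ) < x + 1 + p)) (le_of_lt hp0) (by linarith)
    (by ring : p + (1 - p) = 1)
  rw [← h1] at hc
  simp only [Function.comp, smul_eq_mul] at hc
  have hG1 : Real.Gamma (x + 1 + p) = (x + p) * Real.Gamma (x + p) := by
    have := Real.Gamma_add_one (ne_of_gt hxp)
    rw [show x + 1 + p = (x + p) + 1 by ring, this]
  rw [hG1, Real.log_mul (ne_of_gt hxp) (ne_of_gt (Real.Gamma_pos_of_pos hxp))] at hc
  have hc' : Real.log (Real.Gamma (x + 1)) ≤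
      Real.log (Real.Gamma (x + p)) + (1 - p) * Real.log (x + p) := by nlinarith
  have hGpos : 0 < Real.Gamma (x + 1) := Real.Gamma_pos_of_pos (by linarith)
  have hrpow : (x + p) ^ (1 - p) = Real.exp ((1 - p) * Real.log (x + p)) := by
    rw [Real.rpow_def_of_pos hxp]; ring_nf
  calc Real.Gamma (x + 1) = Real.exp (Real.log (Real.Gamma (x + 1))) :=
        (Real.exp_log hGpos).symm
    _ ≤ Real.exp (Real.log (Real.Gamma (x + p)) + (1 - p) * Real.log (x + p)) :=
        Real.exp_le_exp.2 hc'
    _ = Real.Gamma (x + p) * (x + p) ^ (1 - p) := by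
        rw [Real.exp_add, Real.exp_log (Real.Gamma_pos_of_pos hxp), hrpow]

/-- key summability -/
lemma summable_ml (hp0 : 0 < p) (hp1 : p < 1) {c : ℝ} (hc : 0 ≤ c) :
    Summable (fun k : ℕ => c ^ k / Real.Gamma (p * k + 1)) := by
  apply summable_of_ratio_norm_eventually_le (r := 1/2) (by norm_num)
  -- eventually ‖a (k+1)‖ ≤ 1/2 ‖a k‖
  have htend : Tendsto (fun k : ℕ => (p * k + 1) ^ p) atTop atTop := by
    apply (tendsto_rpow_atTop hp0).comp
    exact Filter.tendsto_atTop_add_const_right _ 1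
      ((tendsto_natCast_atTop_atTop (R := ℝ)).const_mul_atTop hp0)
  filter_upwards [htend.eventually_ge_atTop (4 * c + 4)] with k hk
  set x := p * k + 1 with hxdef
  have hx1 : (1:ℝ) ≤ x := by
    have h0 : (0:ℝ) ≤ p * k := by positivity
    simp only [hxdef]; linarith
  have hx0 : (0:ℝ) < x := by linarith
  have hGx : 0 < Real.Gamma x := Real.Gamma_pos_of_pos hx0
  have hGxp : 0 < Real.Gamma (x + p) := Real.Gamma_pos_of_pos (by linarith)
  -- Γ(x+p) ≥ x^p/2 * Γ(x)
  have key : x ^ p / 2 * Real.Gamma x ≤ Real.Gamma (x + p) := by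
    have h1 := Gamma_ratio hp0 hp1 hx0
    have h2 : Real.Gamma (x + 1) = x * Real.Gamma x := by
      rw [Real.Gamma_add_one (ne_of_gt hx0)]
    have h3 : (x + p) ^ (1 - p) ≤ 2 * x ^ (1 - p) := by
      calc (x + p) ^ (1 - p) ≤ (2 * x) ^ (1 - p) :=
            Real.rpow_le_rpow (by linarith) (by linarith) (by linarith)
        _ = 2 ^ (1-p) * x ^ (1-p) := Real.mul_rpow (by norm_num) (le_of_lt hx0)
        _ ≤ 2 * x ^ (1-p) := by
            have : (2:ℝ) ^ (1-p) ≤ 2 ^ (1:ℝ) :=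
              Real.rpow_le_rpow_of_exponent_le (by norm_num) (by linarith)
            simp only [Real.rpow_one] at this
            have := Real.rpow_nonneg (le_of_lt hx0) (1-p)
            nlinarith
    have hxpow : 0 < x ^ (1 - p) := Real.rpow_pos_of_pos hx0 _
    have h4 : x * Real.Gamma x ≤ Real.Gamma (x + p) * (2 * x ^ (1 - p)) := by
      calc x * Real.Gamma x = Real.Gamma (x + 1) := h2.symm
        _ ≤ Real.Gamma (x + p) * (x + p) ^ (1-p) := h1
        _ ≤ Real.Gamma (x + p) * (2 * x ^ (1-p)) := by nlinarith
    have hxx : x ^ p * x ^ (1 - p) = x := by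
      rw [← Real.rpow_add hx0]; norm_num
    nlinarith [Real.rpow_pos_of_pos hx0 p]
  have hxp_eq : p * ((k+1):ℕ) + 1 = x + p := by push_cast; simp only [hxdef]; ring
  rw [hxp_eq]
  have hxP : (4:ℝ) * c + 4 ≤ x ^ p := hk
  have hGx' : (0:ℝ) < Real.Gamma x := hGx
  rw [Real.norm_eq_abs, Real.norm_eq_abs,
    abs_of_nonneg (by positivity : (0:ℝ) ≤ c ^ (k+1) / Real.Gamma (x+p)),
    abs_of_nonneg (by positivity : (0:ℝ) ≤ c ^ k / Real.Gamma x)]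
  rw [div_le_iff₀ hGxp]
  have hcpow : (0:ℝ) ≤ c ^ k := by positivity
  have h6 : c * 2 ≤ x ^ p / 2 := by nlinarith [Real.rpow_pos_of_pos hx0 p]
  have heq : 1/2*(c^k/Real.Gamma x)*Real.Gamma (x+p)
      = (1/2*c^k*Real.Gamma (x+p))/Real.Gamma x := by ring
  rw [heq, le_div_iff₀ hGx']
  have e1 : c ^ (k+1) * Real.Gamma x = (c * 2) * (c ^ k * Real.Gamma x) / 2 := by ring
  rw [e1]
  have e2 : (c*2) * (c^k * Real.Gamma x) / 2 ≤ (x^p/2) * (c^k * Real.Gamma x) / 2 := by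
    have h7 : (0:ℝ) ≤ c^k * Real.Gamma x := mul_nonneg hcpow hGx'.le
    nlinarith
  refine e2.trans ?_
  have e3 : (x^p/2) * (c^k * Real.Gamma x) / 2 = 1/2 * c^k * (x^p/2 * Real.Gamma x) := by ring
  rw [e3]
  have h8 : (0:ℝ) ≤ 1/2 * c^k := by positivity
  exact mul_le_mul_of_nonneg_left key h8


/-- The function `u t = E_p(-t^p)`. -/
noncomputable def uf (p t : ℝ) : ℝ := mittagLeffler p (-(t ^ p))

lemma u_def (p t : ℝ) : uf p t = ∑' k : ℕ, (-(t ^ p)) ^ k / Real.Gamma (p * k + 1) := rfl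

lemma term_abs (hp0 : 0 < p) {t : ℝ} (ht : 0 ≤ t) (k : ℕ) :
    |(-(t ^ p)) ^ k / Real.Gamma (p * k + 1)| = (t ^ p) ^ k / Real.Gamma (p * k + 1) := by
  rw [abs_div, abs_of_pos (G_pos hp0 k), abs_pow, abs_neg,
    abs_of_nonneg (Real.rpow_nonneg ht p)]

lemma summable_u (hp0 : 0 < p) (hp1 : p < 1) {t : ℝ} (ht : 0 ≤ t) :
    Summable (fun k : ℕ => (-(t ^ p)) ^ k / Real.Gamma (p * k + 1)) := by
  apply Summable.of_abs
  have : (fun k : ℕ => |(-(t ^ p)) ^ k / Real.Gamma (p * k + 1)|)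
      = fun k : ℕ => (t ^ p) ^ k / Real.Gamma (p * k + 1) := by
    funext k; exact term_abs hp0 ht k
  rw [this]
  exact summable_ml hp0 hp1 (Real.rpow_nonneg ht p)

lemma u_zero (hp0 : 0 < p) : uf p 0 = 1 := by
  rw [u_def, Real.zero_rpow (ne_of_gt hp0), neg_zero]
  rw [tsum_eq_single 0 (fun k hk => by
    rw [zero_pow hk, zero_div])]
  norm_num [Real.Gamma_one]

lemma u_cont (hp0 : 0 < p) (hp1 : p < 1) : ContinuousOn (uf p) (Ici 0) := by
  intro x hx
  have hsub : ContinuousOn (uf p) (Icc (0:ℝ) (x+1)) := by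
    have hrw : uf p = fun t => ∑' k : ℕ, (-(t ^ p)) ^ k / Real.Gamma (p * k + 1) := rfl
    rw [hrw]
    apply continuousOn_tsum (f := fun (k : ℕ) (t : ℝ) => (-(t ^ p)) ^ k / Real.Gamma (p * k + 1)) (u := fun k : ℕ => ((x+1) ^ p) ^ k / Real.Gamma (p * k + 1))
    · intro k
      apply ContinuousOn.div_const
      apply ContinuousOn.pow
      apply ContinuousOn.neg
      intro y _
      exact ((Real.continuousAt_rpow_const y p (Or.inr hp0.le)).continuousWithinAt)
    · exact summable_ml hp0 hp1 (Real.rpow_nonneg (by simp at hx; linarith) p)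
    · intro k y hy
      rw [Real.norm_eq_abs, term_abs hp0 hy.1 k]
      gcongr
      · exact Real.rpow_nonneg hy.1 p
      · exact hy.1
      · linarith [hy.2]
  have hmem : Icc (0:ℝ) (x+1) ∈ 𝓝[Ici 0] x := by
    rw [mem_nhdsWithin]
    refine ⟨Iio (x+1), isOpen_Iio, by simp, ?_⟩
    rintro y ⟨hy1, hy2⟩
    exact ⟨hy2, le_of_lt hy1⟩
  exact ContinuousWithinAt.mono_of_mem_nhdsWithin ((hsub x ⟨(mem_Ici.1 hx), by linarith⟩)) hmem


/-- Real Beta integral formula. -/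
lemma realBeta {a b T : ℝ} (ha : 0 < a) (hb : 0 < b) (hT : 0 < T) :
    ∫ x in (0:ℝ)..T, x ^ (a-1) * (T-x) ^ (b-1)
      = Real.Gamma a * Real.Gamma b / Real.Gamma (a+b) * T ^ (a+b-1) := by
  have hcongr : ∀ x ∈ Set.uIcc (0:ℝ) T,
      (((fun y => y ^ (a-1) * (T-y) ^ (b-1)) x : ℝ) : ℂ)
        = (x:ℂ) ^ ((a:ℂ) - 1) * ((T:ℂ) - (x:ℂ)) ^ ((b:ℂ) - 1) := by
    intro x hx
    rw [Set.uIcc_of_le hT.le] at hx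
    simp only [Complex.ofReal_mul]
    rw [Complex.ofReal_cpow hx.1, Complex.ofReal_cpow (by linarith [hx.2] : (0:ℝ) ≤ T - x)]
    push_cast
    ring
  have h1 : ((∫ x in (0:ℝ)..T, x ^ (a-1) * (T-x) ^ (b-1) : ℝ) : ℂ)
      = ∫ x in (0:ℝ)..T, (x:ℂ) ^ ((a:ℂ) - 1) * ((T:ℂ) - (x:ℂ)) ^ ((b:ℂ) - 1) := by
    rw [← intervalIntegral.integral_ofReal]
    exact intervalIntegral.integral_congr hcongr
  have h2 := Complex.betaIntegral_scaled (a:ℂ) (b:ℂ) hT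
  have habR : (0:ℝ) < a + b := by linarith
  have hab : Complex.Gamma ((a:ℂ) + (b:ℂ)) ≠ 0 := by
    rw [show ((a:ℂ) + (b:ℂ)) = ((a+b:ℝ):ℂ) by push_cast; ring, Complex.Gamma_ofReal]
    exact_mod_cast (Real.Gamma_pos_of_pos habR).ne'
  have h3 := Complex.Gamma_mul_Gamma_eq_betaIntegral
    (by simpa using ha : 0 < ((a:ℂ)).re) (by simpa using hb : 0 < ((b:ℂ)).re)
  have h4 : Complex.betaIntegral (a:ℂ) (b:ℂ)
      = Complex.Gamma (a:ℂ) * Complex.Gamma (b:ℂ) / Complex.Gamma ((a:ℂ)+(b:ℂ)) := by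
    rw [h3, mul_comm, mul_div_assoc, div_self hab, mul_one]
  have h5 : ((T:ℂ)) ^ ((a:ℂ) + (b:ℂ) - 1) = ((T ^ (a+b-1) : ℝ) : ℂ) := by
    rw [Complex.ofReal_cpow hT.le]
    push_cast
    ring_nf
  have h6 : ((T ^ (a+b-1) : ℝ) : ℂ) * (Complex.Gamma (a:ℂ) * Complex.Gamma (b:ℂ)
      / Complex.Gamma ((a:ℂ)+(b:ℂ)))
      = ((Real.Gamma a * Real.Gamma b / Real.Gamma (a+b) * T ^ (a+b-1) : ℝ) : ℂ) := by
    rw [show ((a:ℂ) + (b:ℂ)) = ((a+b:ℝ):ℂ) by push_cast; ring]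
    rw [Complex.Gamma_ofReal, Complex.Gamma_ofReal, Complex.Gamma_ofReal]
    push_cast
    ring
  have hfin : ((∫ x in (0:ℝ)..T, x ^ (a-1) * (T-x) ^ (b-1) : ℝ) : ℂ)
      = ((Real.Gamma a * Real.Gamma b / Real.Gamma (a+b) * T ^ (a+b-1) : ℝ) : ℂ) := by
    rw [h1, h2, h4, h5, h6]
  exact_mod_cast hfin


lemma ker_II (hp0 : 0 < p) {t c : ℝ} (htc : t ≤ c) :
    IntervalIntegrable (fun s => (c - s) ^ (p-1)) volume 0 t := by
  have h1 : IntervalIntegrable (fun x : ℝ => x ^ (p-1)) volume c (c - t) :=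
    intervalIntegrable_rpow' (by linarith)
  have h2 := h1.comp_sub_left c
  simpa using h2

lemma kerU_II (hp0 : 0 < p) (hp1 : p < 1) {t c : ℝ} (ht : 0 ≤ t) (htc : t ≤ c) :
    IntervalIntegrable (fun s => (c - s) ^ (p-1) * uf p s) volume 0 t := by
  apply (ker_II hp0 htc).mul_continuousOn
  apply (u_cont hp0 hp1).mono
  rw [Set.uIcc_of_le ht]
  exact fun y hy => hy.1

lemma kerU_int (hp0 : 0 < p) (hp1 : p < 1) {t c : ℝ} (ht : 0 ≤ t) (htc : t ≤ c) :
    IntegrableOn (fun s => (c - s) ^ (p-1) * uf p s) (Ioo 0 t) volume :=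
  ((intervalIntegrable_iff_integrableOn_Ioc_of_le ht).1
    (kerU_II hp0 hp1 ht htc)).mono_set Ioo_subset_Ioc_self

lemma kerPow_II (hp0 : 0 < p) (hp1 : p < 1) {t c : ℝ} (ht : 0 ≤ t) (htc : t ≤ c) (k : ℕ) :
    IntervalIntegrable (fun s => (c - s) ^ (p-1) * s ^ (p * k)) volume 0 t := by
  apply (ker_II hp0 htc).mul_continuousOn
  intro y _
  exact (Real.continuousAt_rpow_const y (p*k) (Or.inr (by positivity))).continuousWithinAt

/-- The Beta integral evaluation on `Ioo`. -/
lemma beta_Ioo (hp0 : 0 < p) (hp1 : p < 1) {t : ℝ} (ht : 0 < t) (k : ℕ) :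
    ∫ s in Ioo (0:ℝ) t, (t - s) ^ (p-1) * s ^ (p * k)
      = Real.Gamma (p*k+1) * Real.Gamma p / Real.Gamma (p*k+1+p) * t ^ (p*k+p) := by
  have h0 : ∫ s in Ioo (0:ℝ) t, (t - s) ^ (p-1) * s ^ (p * k)
      = ∫ s in (0:ℝ)..t, s ^ ((p*k+1)-1) * (t-s) ^ (p-1) := by
    rw [intervalIntegral.integral_of_le ht.le, integral_Ioc_eq_integral_Ioo]
    apply setIntegral_congr_fun measurableSet_Ioo
    intro s _
    rw [show p*k+1-1 = p*k by ring]
    ring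
  rw [h0, realBeta (by positivity) hp0 ht]
  rw [show p*k+1+p-1 = p*k+p by ring]

/-- The Volterra integral identity for `uf`. -/
lemma volterra (hp0 : 0 < p) (hp1 : p < 1) {t : ℝ} (ht : 0 ≤ t) :
    ∫ s in Ioo (0:ℝ) t, (t - s) ^ (p-1) * uf p s = Real.Gamma p * (1 - uf p t) := by
  rcases eq_or_lt_of_le ht with h | ht
  · rw [← h, Set.Ioo_self, u_zero hp0]
    simp
  set G : ℕ → ℝ := fun k => Real.Gamma (p * k + 1) with hG
  set F : ℕ → ℝ → ℝ := fun k s => (t-s) ^ (p-1) * ((-(s ^ p)) ^ k / G k) with hF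
  have hGpos : ∀ k, 0 < G k := fun k => G_pos hp0 k
  have htp : 0 < t ^ p := Real.rpow_pos_of_pos ht p
  -- each F k is integrable on Ioo 0 t with explicit integral of the absolute value
  have hFeq : ∀ k : ℕ, ∀ s ∈ Ioo (0:ℝ) t,
      F k s = ((-1:ℝ)) ^ k / G k * ((t-s) ^ (p-1) * s ^ (p*k)) := by
    intro k s hs
    have hsp : (-(s ^ p)) ^ k = (-1:ℝ)^k * (s^p)^k := by
      rw [neg_pow]
    have hspk : (s ^ p) ^ k = s ^ (p * k) := by
      rw [← Real.rpow_natCast (s ^ p) k, ← Real.rpow_mul hs.1.le]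
    rw [hF]; simp only []
    rw [hsp, hspk]; ring
  have hFint : ∀ k : ℕ, IntegrableOn (F k) (Ioo 0 t) volume := by
    intro k
    have h1 := ((intervalIntegrable_iff_integrableOn_Ioc_of_le ht.le).1
      (kerPow_II hp0 hp1 ht.le le_rfl k)).mono_set Ioo_subset_Ioc_self
    have h2 := h1.const_mul ((-1:ℝ)^k / G k)
    apply MeasureTheory.IntegrableOn.congr_fun h2 ?_ measurableSet_Ioo
    intro s hs
    exact (hFeq k s hs).symm
  have hbeta : ∀ k : ℕ, ∫ s in Ioo (0:ℝ) t, (t - s) ^ (p-1) * s ^ (p * k)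
      = Real.Gamma (p*k+1) * Real.Gamma p / Real.Gamma (p*k+1+p) * t ^ (p*k+p) :=
    fun k => beta_Ioo hp0 hp1 ht k
  have hFval : ∀ k : ℕ, ∫ s in Ioo (0:ℝ) t, F k s
      = (-1:ℝ)^k * (Real.Gamma p * t ^ (p*k+p) / Real.Gamma (p*k+1+p)) := by
    intro k
    rw [setIntegral_congr_fun measurableSet_Ioo (hFeq k), MeasureTheory.integral_const_mul, hbeta k]
    have hne : Real.Gamma (p*k+1+p) ≠ 0 := (Real.Gamma_pos_of_pos (by positivity)).ne'
    simp only [hG]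
    field_simp [(G_pos hp0 k).ne']
  -- the norm integrals
  have hFnorm : ∀ k : ℕ, ∫⁻ s in Ioo (0:ℝ) t, ‖F k s‖ₑ
      = ENNReal.ofReal (Real.Gamma p * t ^ (p*k+p) / Real.Gamma (p*k+1+p)) := by
    intro k
    rw [← ofReal_integral_norm_eq_lintegral_enorm (hFint k)]
    congr 1
    have : ∀ s ∈ Ioo (0:ℝ) t, ‖F k s‖ = (t-s) ^ (p-1) * s ^ (p*k) / G k := by
      intro s hs
      rw [Real.norm_eq_abs, hFeq k s hs, abs_mul, abs_div, abs_pow, abs_neg, abs_one,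
        one_pow, abs_of_pos (hGpos k), abs_mul,
        abs_of_nonneg (Real.rpow_nonneg (by linarith [hs.2] : (0:ℝ) ≤ t - s) _),
        abs_of_nonneg (Real.rpow_nonneg hs.1.le _)]
      ring
    rw [setIntegral_congr_fun measurableSet_Ioo this]
    have : (fun s => (t-s) ^ (p-1) * s ^ (p*k) / G k)
        = fun s => (1 / G k) * ((t-s) ^ (p-1) * s ^ (p*k)) := by
      funext s; ring
    rw [this, MeasureTheory.integral_const_mul, hbeta k]
    have hne : Real.Gamma (p*k+1+p) ≠ 0 := (Real.Gamma_pos_of_pos (by positivity)).ne'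
    simp only [hG]
    field_simp [(G_pos hp0 k).ne']
  -- summability of the values
  have hsum0 : Summable (fun k : ℕ => (t^p)^k / G k) := summable_ml hp0 hp1 htp.le
  have hsum1 : Summable (fun k : ℕ => Real.Gamma p * t ^ (p*k+p) / Real.Gamma (p*k+1+p)) := by
    have hshift : Summable (fun k : ℕ => (t^p)^(k+1) / G (k+1)) :=
      (summable_nat_add_iff 1).2 hsum0
    apply Summable.congr (hshift.mul_left (Real.Gamma p))
    intro k
    have h1 : t ^ (p*k+p) = (t^p)^(k+1) := by
      rw [← Real.rpow_natCast (t ^ p) (k+1), ← Real.rpow_mul ht.le]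
      congr 1
      push_cast; ring
    have h2 : Real.Gamma (p*k+1+p) = G (k+1) := by
      rw [hG]; congr 1; push_cast; ring
    rw [h1, h2]
    ring
  -- interchange
  have hmeas : ∀ k : ℕ, AEStronglyMeasurable (F k) (volume.restrict (Ioo 0 t)) := by
    intro k
    apply ContinuousOn.aestronglyMeasurable ?_ measurableSet_Ioo
    apply ContinuousOn.mul
    · intro s hs
      have : ContinuousAt (fun s => (t - s) ^ (p-1)) s := by
        apply ContinuousAt.rpow_const (by fun_prop)
        left; simp only [ne_eq, sub_ne_zero]
        exact ne_of_gt hs.2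
      exact this.continuousWithinAt
    · apply ContinuousOn.div_const
      apply ContinuousOn.pow
      apply ContinuousOn.neg
      intro s _
      exact (Real.continuousAt_rpow_const s p (Or.inr hp0.le)).continuousWithinAt
  have hinter : ∫ s in Ioo (0:ℝ) t, (∑' k : ℕ, F k s)
      = ∑' k : ℕ, ∫ s in Ioo (0:ℝ) t, F k s := by
    apply integral_tsum hmeas
    rw [funext hFnorm]  -- ?
    rw [← ENNReal.ofReal_tsum_of_nonneg (fun k => by positivity) hsum1]
    exact ENNReal.ofReal_ne_top
  -- left side congruence
  have hleft : ∫ s in Ioo (0:ℝ) t, (t - s) ^ (p-1) * uf p s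
      = ∫ s in Ioo (0:ℝ) t, (∑' k : ℕ, F k s) := by
    apply setIntegral_congr_fun measurableSet_Ioo
    intro s _
    show (t - s) ^ (p-1) * uf p s = ∑' k : ℕ, F k s
    rw [u_def, hF, ← tsum_mul_left]
  -- right side
  have hsummu : Summable (fun k : ℕ => (-(t ^ p)) ^ k / G k) := summable_u hp0 hp1 ht.le
  have hright : ∑' k : ℕ, ∫ s in Ioo (0:ℝ) t, F k s = Real.Gamma p * (1 - uf p t) := by
    rw [funext hFval]  -- ?
    have huf : uf p t = 1 + ∑' k : ℕ, (-(t ^ p)) ^ (k+1) / G (k+1) := by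
      rw [u_def, hsummu.tsum_eq_zero_add]
      congr 1
      rw [pow_zero, hG]
      norm_num [Real.Gamma_one]
    have hterm : ∀ k : ℕ, (-1:ℝ)^k * (Real.Gamma p * t ^ (p*k+p) / Real.Gamma (p*k+1+p))
        = Real.Gamma p * (-((-(t ^ p)) ^ (k+1) / G (k+1))) := by
      intro k
      have h1 : t ^ (p*k+p) = (t^p)^(k+1) := by
        rw [← Real.rpow_natCast (t ^ p) (k+1), ← Real.rpow_mul ht.le]
        congr 1; push_cast; ring
      have h2 : Real.Gamma (p*k+1+p) = G (k+1) := by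
        rw [hG]; congr 1; push_cast; ring
      have h3 : (-(t ^ p)) ^ (k+1) = (-1:ℝ)^(k+1) * (t^p)^(k+1) := by rw [neg_pow]
      rw [h1, h2, h3, pow_succ]
      ring
    rw [funext hterm]  -- ?
    rw [tsum_mul_left, tsum_neg, huf]
    ring
  rw [hleft, hinter, hright]


lemma interval_to_Ioo {f : ℝ → ℝ} {a b : ℝ} (h : a ≤ b) :
    ∫ s in a..b, f s = ∫ s in Ioo a b, f s := by
  rw [intervalIntegral.integral_of_le h, integral_Ioc_eq_integral_Ioo]

/-- kernel integral evaluation -/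
lemma ker_eval (hp0 : 0 < p) {σ τ : ℝ} (h : σ ≤ τ) :
    ∫ s in Ioo σ τ, (τ - s) ^ (p-1) = (τ - σ) ^ p / p := by
  rw [← interval_to_Ioo h]
  rw [intervalIntegral.integral_comp_sub_left (fun x => x ^ (p-1)) τ]
  rw [integral_rpow (Or.inl (by linarith))]
  rw [sub_self, Real.zero_rpow (show p - 1 + 1 ≠ 0 by intro hc; rw [show p-1+1 = p by ring] at hc; exact hp0.ne' hc)]
  rw [show p - 1 + 1 = p by ring]
  ring

/-- splitting of the integral -/
lemma split_int (hp0 : 0 < p) (hp1 : p < 1) {σ τ : ℝ} (h0 : 0 ≤ σ) (h : σ ≤ τ) :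
    ∫ s in Ioo (0:ℝ) τ, (τ - s) ^ (p-1) * uf p s
      = (∫ s in Ioo (0:ℝ) σ, (τ - s) ^ (p-1) * uf p s)
        + ∫ s in Ioo σ τ, (τ - s) ^ (p-1) * uf p s := by
  have hτ : (0:ℝ) ≤ τ := le_trans h0 h
  have hI1 : IntervalIntegrable (fun s => (τ - s) ^ (p-1) * uf p s) volume 0 σ :=
    kerU_II hp0 hp1 h0 h
  have hI2 : IntervalIntegrable (fun s => (τ - s) ^ (p-1) * uf p s) volume σ τ := by
    apply (kerU_II hp0 hp1 hτ le_rfl).mono_set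
    rw [Set.uIcc_of_le h, Set.uIcc_of_le hτ]
    exact Set.Icc_subset_Icc h0 le_rfl
  have := intervalIntegral.integral_add_adjacent_intervals hI1 hI2
  rw [interval_to_Ioo h0, interval_to_Ioo h, interval_to_Ioo hτ] at this
  exact this.symm

lemma kerU_int' (hp0 : 0 < p) (hp1 : p < 1) {σ τ : ℝ} (h0 : 0 ≤ σ) (h : σ ≤ τ) :
    IntegrableOn (fun s => (τ - s) ^ (p-1) * uf p s) (Ioo σ τ) volume := by
  have hτ : (0:ℝ) ≤ τ := le_trans h0 h
  have hI2 : IntervalIntegrable (fun s => (τ - s) ^ (p-1) * uf p s) volume σ τ := by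
    apply (kerU_II hp0 hp1 hτ le_rfl).mono_set
    rw [Set.uIcc_of_le h, Set.uIcc_of_le hτ]
    exact Set.Icc_subset_Icc h0 le_rfl
  exact ((intervalIntegrable_iff_integrableOn_Ioc_of_le h).1 hI2).mono_set Ioo_subset_Ioc_self

lemma ker_int' (hp0 : 0 < p) (hp1 : p < 1) {σ τ : ℝ} (h : σ ≤ τ) :
    IntegrableOn (fun s => (τ - s) ^ (p-1)) (Ioo σ τ) volume := by
  have hI : IntervalIntegrable (fun s => (τ - s) ^ (p-1)) volume σ τ := by
    have h1 : IntervalIntegrable (fun x : ℝ => x ^ (p-1)) volume (τ - σ) (τ - τ) :=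
      intervalIntegrable_rpow' (by linarith)
    simpa using h1.comp_sub_left τ
  exact ((intervalIntegrable_iff_integrableOn_Ioc_of_le h).1 hI).mono_set Ioo_subset_Ioc_self

/-- Claim 1 : there is no first zero. -/
lemma no_first_zero (hp0 : 0 < p) (hp1 : p < 1) {τ : ℝ} (hτ : 0 < τ)
    (hnn : ∀ s ∈ Icc (0:ℝ) τ, 0 ≤ uf p s) (hzero : uf p τ = 0) : False := by
  have hΓp : 0 < Real.Gamma p := Real.Gamma_pos_of_pos hp0
  have hΓ1 : 0 < Real.Gamma (p+1) := Real.Gamma_pos_of_pos (by linarith)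
  have hΓrel : Real.Gamma (p+1) = p * Real.Gamma p := by
    rw [show p + 1 = p + 1 from rfl, Real.Gamma_add_one hp0.ne']
  set δ : ℝ := (Real.Gamma (p+1)/2) ^ (p⁻¹) with hδdef
  have hδ : 0 < δ := Real.rpow_pos_of_pos (by positivity) _
  have hδp : δ ^ p = Real.Gamma (p+1)/2 := Real.rpow_inv_rpow (by positivity) hp0.ne'
  set a : ℝ := max 0 (τ - δ) with hadef
  have ha0 : 0 ≤ a := le_max_left _ _
  have haτ : a < τ := by
    rw [hadef]; apply max_lt hτ (by linarith)
  have hka : (τ - a) ^ p ≤ Real.Gamma (p+1)/2 := by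
    rw [← hδp]
    apply Real.rpow_le_rpow (by linarith) ?_ hp0.le
    have : τ - δ ≤ a := le_max_right _ _
    linarith
  -- maximum of uf on [a, τ]
  have hcont : ContinuousOn (uf p) (Icc a τ) :=
    (u_cont hp0 hp1).mono (fun y hy => le_trans ha0 hy.1)
  obtain ⟨σ, hσmem, hσmax⟩ :=
    isCompact_Icc.exists_isMaxOn ⟨a, left_mem_Icc.2 haτ.le⟩ hcont
  set M := uf p σ with hMdef
  have hsubset : Icc a τ ⊆ Icc 0 τ := Icc_subset_Icc ha0 le_rfl
  have hM0 : 0 ≤ M := hnn σ (hsubset hσmem)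
  have hMb : ∀ s ∈ Icc a τ, uf p s ≤ M := fun s hs => hσmax hs
  -- the contraction estimate gives M = 0
  have hM : M = 0 := by
    have hσ0 : 0 ≤ σ := le_trans ha0 hσmem.1
    have hστ : σ ≤ τ := hσmem.2
    have h1 : ∫ s in Ioo (0:ℝ) τ, (τ - s) ^ (p-1) * uf p s = Real.Gamma p := by
      rw [volterra hp0 hp1 hτ.le, hzero]; ring
    have h2 := split_int hp0 hp1 hσ0 hστ
    have h3 : ∫ s in Ioo σ τ, (τ - s) ^ (p-1) * uf p s
        ≤ M * ((τ - σ) ^ p / p) := by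
      have hb : ∫ s in Ioo σ τ, M * (τ - s) ^ (p-1) = M * ((τ - σ) ^ p / p) := by
        rw [MeasureTheory.integral_const_mul, ker_eval hp0 hστ]
      rw [← hb]
      apply setIntegral_mono_on (kerU_int' hp0 hp1 hσ0 hστ)
        ((ker_int' hp0 hp1 hστ).const_mul M) measurableSet_Ioo
      intro s hs
      have hker : (0:ℝ) ≤ (τ - s) ^ (p-1) := Real.rpow_nonneg (by linarith [hs.2]) _
      have hus : uf p s ≤ M := hMb s ⟨le_trans hσmem.1 hs.1.le, hs.2.le⟩
      calc (τ - s) ^ (p-1) * uf p s ≤ (τ - s) ^ (p-1) * M := by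
            apply mul_le_mul_of_nonneg_left hus hker
        _ = M * (τ - s) ^ (p-1) := mul_comm _ _
    have h5 : ∫ s in Ioo (0:ℝ) σ, (τ - s) ^ (p-1) * uf p s
        ≤ ∫ s in Ioo (0:ℝ) σ, (σ - s) ^ (p-1) * uf p s := by
      apply setIntegral_mono_on (kerU_int hp0 hp1 hσ0 hστ)
        (kerU_int hp0 hp1 hσ0 le_rfl) measurableSet_Ioo
      intro s hs
      have hker : (τ - s) ^ (p-1) ≤ (σ - s) ^ (p-1) :=
        Real.rpow_le_rpow_of_nonpos (by linarith [hs.2]) (by linarith [hστ]) (by linarith)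
      exact mul_le_mul_of_nonneg_right hker (hnn s ⟨hs.1.le, by linarith [hs.2, hστ]⟩)
    have h6 : ∫ s in Ioo (0:ℝ) σ, (σ - s) ^ (p-1) * uf p s
        = Real.Gamma p * (1 - M) := by
      rw [volterra hp0 hp1 hσ0, hMdef]
    -- combine
    have h7 : Real.Gamma p - M * ((τ - σ) ^ p / p) ≤ Real.Gamma p * (1 - M) := by
      have hsum : (∫ s in Ioo (0:ℝ) σ, (τ - s) ^ (p-1) * uf p s)
          + (∫ s in Ioo σ τ, (τ - s) ^ (p-1) * uf p s) = Real.Gamma p := by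
        rw [← h2]; exact h1
      linarith [h3, h5, h6]
    have h8 : (τ - σ) ^ p ≤ Real.Gamma (p+1)/2 := by
      refine le_trans (Real.rpow_le_rpow (by linarith [hσmem.2]) ?_ hp0.le) hka
      linarith [hσmem.1]
    -- M * Γp ≤ M * (τ-σ)^p / p ≤ M * Γ(p+1)/(2p) = M Γp / 2
    have h9 : Real.Gamma p * M ≤ M * ((τ - σ) ^ p / p) := by nlinarith
    have h10 : M * ((τ - σ) ^ p / p) ≤ M * (Real.Gamma p / 2) := by
      have h8' : M * (τ - σ) ^ p ≤ M * (p * Real.Gamma p / 2) := by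
        rw [← hΓrel]; exact mul_le_mul_of_nonneg_left h8 hM0
      rw [mul_div_assoc', div_le_iff₀ hp0]
      nlinarith
    have hM' : M ≤ 0 := by nlinarith
    linarith
  -- u vanishes on [a, τ]
  have hzero' : ∀ s ∈ Icc a τ, uf p s = 0 := fun s hs =>
    le_antisymm (hM ▸ hMb s hs) (hnn s (hsubset hs))
  rcases eq_or_lt_of_le ha0 with ha | ha
  · -- a = 0 : contradiction with u 0 = 1
    have h01 : uf p 0 = 1 := u_zero hp0
    have h00 : uf p 0 = 0 := hzero' 0 (by rw [ha]; exact left_mem_Icc.2 haτ.le)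
    rw [h01] at h00
    norm_num at h00
  · -- a > 0
    have haa : a = τ - δ := by
      have h1 : 0 < τ - δ := by
        rcases lt_max_iff.1 ha with h | h
        · exact absurd h (lt_irrefl 0)
        · exact h
      rw [hadef]
      exact max_eq_right h1.le
    have hva : ∫ s in Ioo (0:ℝ) a, (a - s) ^ (p-1) * uf p s = Real.Gamma p := by
      rw [volterra hp0 hp1 ha0, hzero' a (left_mem_Icc.2 haτ.le)]; ring
    have hvτ2 : ∫ s in Ioo (0:ℝ) a, (τ - s) ^ (p-1) * uf p s = Real.Gamma p := by
      have h1 : ∫ s in Ioo (0:ℝ) τ, (τ - s) ^ (p-1) * uf p s = Real.Gamma p := by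
        rw [volterra hp0 hp1 hτ.le, hzero]; ring
      have h2 := split_int hp0 hp1 ha0 haτ.le
      have h3 : ∫ s in Ioo a τ, (τ - s) ^ (p-1) * uf p s = 0 := by
        have : ∀ s ∈ Ioo a τ, (τ - s) ^ (p-1) * uf p s = 0 := by
          intro s hs
          rw [hzero' s ⟨hs.1.le, hs.2.le⟩, mul_zero]
        rw [setIntegral_congr_fun measurableSet_Ioo this]
        simp
      rw [h1, h3] at h2
      linarith
    -- continuity at 0 gives η with u ≥ 1/2 near 0
    have hev : ∀ᶠ s in 𝓝[Ici (0:ℝ)] 0, 1/2 < uf p s := by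
      have hcw : Tendsto (uf p) (𝓝[Ici (0:ℝ)] 0) (𝓝 (uf p 0)) :=
        (u_cont hp0 hp1) 0 (mem_Ici.2 le_rfl)
      rw [u_zero hp0] at hcw
      exact hcw.eventually (eventually_gt_nhds (by norm_num))
    obtain ⟨ε, hε, hball⟩ := Metric.mem_nhdsWithin_iff.1 hev
    set η : ℝ := min (ε/2) (min (a/2) (δ/2)) with hηdef
    have hη0 : 0 < η := by
      apply lt_min (by linarith) (lt_min (by linarith) (by linarith))
    have hηa : η < a := by
      have : η ≤ a/2 := le_trans (min_le_right _ _) (min_le_left _ _)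
      linarith
    have hηrazbo : a < τ - η := by
      have h1 : η ≤ δ/2 := le_trans (min_le_right _ _) (min_le_right _ _)
      rw [haa]; linarith
    have hτη : 0 < τ - η := by linarith
    set c : ℝ := a ^ (p-1) - (τ - η) ^ (p-1) with hcdef
    have hc : 0 < c := by
      rw [hcdef, sub_pos]
      exact Real.rpow_lt_rpow_of_neg ha hηrazbo (by linarith)
    set fd : ℝ → ℝ := fun s => ((a - s) ^ (p-1) - (τ - s) ^ (p-1)) * uf p s with hfddef
    have hint1 : IntegrableOn (fun s => (a - s) ^ (p-1) * uf p s) (Ioo 0 a) volume :=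
      kerU_int hp0 hp1 ha0 le_rfl
    have hint2 : IntegrableOn (fun s => (τ - s) ^ (p-1) * uf p s) (Ioo 0 a) volume :=
      kerU_int hp0 hp1 ha0 haτ.le
    have hintd : IntegrableOn fd (Ioo 0 a) volume := by
      apply MeasureTheory.Integrable.congr (hint1.sub hint2)
      apply Filter.Eventually.of_forall
      intro s
      simp only [Pi.sub_apply, hfddef]
      ring
    have hDzero : ∫ s in Ioo (0:ℝ) a, fd s = 0 := by
      have : ∫ s in Ioo (0:ℝ) a, fd s
          = (∫ s in Ioo (0:ℝ) a, (a - s) ^ (p-1) * uf p s)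
            - ∫ s in Ioo (0:ℝ) a, (τ - s) ^ (p-1) * uf p s := by
        rw [← integral_sub hint1 hint2]
        apply setIntegral_congr_fun measurableSet_Ioo
        intro s _
        rw [hfddef]; ring
      rw [this, hva, hvτ2]; ring
    have hfd_nn : ∀ s ∈ Ioo (0:ℝ) a, 0 ≤ fd s := by
      intro s hs
      apply mul_nonneg
      · rw [sub_nonneg]
        exact Real.rpow_le_rpow_of_nonpos (by linarith [hs.2]) (by linarith [haτ]) (by linarith)
      · exact hnn s ⟨hs.1.le, by linarith [hs.2, haτ]⟩
    have hmono : ∫ s in Ioo (0:ℝ) η, fd s ≤ ∫ s in Ioo (0:ℝ) a, fd s := by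
      apply setIntegral_mono_set hintd
      · rw [EventuallyLE, ae_restrict_iff' measurableSet_Ioo]
        exact Filter.Eventually.of_forall hfd_nn
      · exact (Ioo_subset_Ioo le_rfl hηa.le).eventuallyLE
    have hlow : η * (c/2) ≤ ∫ s in Ioo (0:ℝ) η, fd s := by
      have hconst : ∫ s in Ioo (0:ℝ) η, (c * (1/2) : ℝ) = η * (c/2) := by
        rw [setIntegral_const, measureReal_def, Real.volume_Ioo, smul_eq_mul,
          ENNReal.toReal_ofReal (by linarith)]
        ring
      rw [← hconst]
      apply setIntegral_mono_on
        (integrableOn_const (by rw [Real.volume_Ioo]; exact ENNReal.ofReal_ne_top))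
        (hintd.mono_set (Ioo_subset_Ioo le_rfl hηa.le)) measurableSet_Ioo
      intro s hs
      have hs0 : 0 < s := hs.1
      have hsη : s < η := hs.2
      have hker1 : a ^ (p-1) ≤ (a - s) ^ (p-1) :=
        Real.rpow_le_rpow_of_nonpos (by linarith) (by linarith) (by linarith)
      have hker2 : (τ - s) ^ (p-1) ≤ (τ - η) ^ (p-1) :=
        Real.rpow_le_rpow_of_nonpos (by linarith) (by linarith) (by linarith)
      have hu2 : 1/2 ≤ uf p s := by
        apply le_of_lt
        have hmem : s ∈ Metric.ball (0:ℝ) ε ∩ Ici 0 := by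
          constructor
          · rw [Metric.mem_ball, Real.dist_eq, sub_zero, abs_of_pos hs0]
            have : η ≤ ε/2 := min_le_left _ _
            linarith
          · exact mem_Ici.2 hs0.le
        exact hball hmem
      have hd : c ≤ (a - s) ^ (p-1) - (τ - s) ^ (p-1) := by
        rw [hcdef]; linarith
      rw [hfddef]
      calc c * (1/2) ≤ ((a - s) ^ (p-1) - (τ - s) ^ (p-1)) * uf p s := by
            apply mul_le_mul hd hu2 (by norm_num) (by linarith)
        _ = _ := rfl
    have hpos : 0 < η * (c/2) := by positivity
    linarith


/-- Global nonnegativity of `uf` on `[0, T]`. -/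
lemma uf_nonneg (hp0 : 0 < p) (hp1 : p < 1) {T : ℝ} (hT : 0 ≤ T) :
    ∀ t ∈ Icc (0:ℝ) T, 0 ≤ uf p t := by
  by_contra hcon
  push_neg at hcon
  obtain ⟨t0, ht0mem, ht0⟩ := hcon
  set B : Set ℝ := Icc (0:ℝ) T ∩ uf p ⁻¹' (Iic 0) with hB
  have hBne : B.Nonempty := ⟨t0, ht0mem, le_of_lt ht0⟩
  have hBbdd : BddBelow B := ⟨0, fun x hx => hx.1.1⟩
  have hBclosed : IsClosed B := by
    apply ContinuousOn.preimage_isClosed_of_isClosed ?_ isClosed_Icc isClosed_Iic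
    exact (u_cont hp0 hp1).mono (fun y hy => hy.1)
  set T0 : ℝ := sInf B with hT0def
  have hT0B : T0 ∈ B := hBclosed.csInf_mem hBne hBbdd
  have hT0le : uf p T0 ≤ 0 := hT0B.2
  have hT00 : 0 ≤ T0 := hT0B.1.1
  have hT0pos : 0 < T0 := by
    rcases eq_or_lt_of_le hT00 with h | h
    · exfalso
      rw [← h] at hT0le
      rw [u_zero hp0] at hT0le
      norm_num at hT0le
    · exact h
  have hstrict : ∀ s, 0 ≤ s → s < T0 → 0 < uf p s := by
    intro s hs0 hsT0
    by_contra hsneg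
    push_neg at hsneg
    have hsB : s ∈ B := ⟨⟨hs0, le_trans hsT0.le hT0B.1.2⟩, hsneg⟩
    exact absurd (csInf_le hBbdd hsB) (not_le.2 hsT0)
  have hbelow : ∀ s ∈ Icc (0:ℝ) T0, 0 ≤ uf p s := by
    intro s hs
    rcases eq_or_lt_of_le hs.2 with h | h
    · -- s = T0 : limit from the left
      rw [h]
      have hne : (𝓝[Ico (0:ℝ) T0] T0).NeBot := by
        apply mem_closure_iff_nhdsWithin_neBot.1
        rw [closure_Ico (ne_of_lt hT0pos)]
        exact right_mem_Icc.2 hT00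
      have htend : Tendsto (uf p) (𝓝[Ico (0:ℝ) T0] T0) (𝓝 (uf p T0)) := by
        apply ((u_cont hp0 hp1) T0 (mem_Ici.2 hT00)).mono_left
        apply nhdsWithin_mono
        exact fun y hy => hy.1
      apply ge_of_tendsto htend
      apply eventually_nhdsWithin_of_forall
      intro x hx
      exact (hstrict x hx.1 hx.2).le
    · exact (hstrict s hs.1 h).le
  have hT0zero : uf p T0 = 0 := le_antisymm hT0le (hbelow T0 (right_mem_Icc.2 hT00))
  exact no_first_zero hp0 hp1 hT0pos hbelow hT0zero

end MLaux

open MLaux in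
theorem mittagLeffler_le_one (p x : ℝ) (hp0 : 0 < p) (hp1 : p < 1) (hx : x < 0) :
    mittagLeffler p x ≤ 1 := by
  set τ0 : ℝ := (-x) ^ (p⁻¹) with hτ0def
  have hτ0 : 0 < τ0 := Real.rpow_pos_of_pos (by linarith) _
  have hval : uf p τ0 = mittagLeffler p x := by
    have h1 : τ0 ^ p = -x := Real.rpow_inv_rpow (by linarith) hp0.ne'
    show mittagLeffler p (-(τ0 ^ p)) = mittagLeffler p x
    rw [h1, neg_neg]
  have hnn := uf_nonneg hp0 hp1 hτ0.le
  have hv := volterra hp0 hp1 hτ0.le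
  have hint : 0 ≤ ∫ s in Ioo (0:ℝ) τ0, (τ0 - s) ^ (p-1) * uf p s := by
    apply setIntegral_nonneg measurableSet_Ioo
    intro s hs
    exact mul_nonneg (Real.rpow_nonneg (by linarith [hs.2]) _)
      (hnn s ⟨hs.1.le, hs.2.le⟩)
  have hΓp : 0 < Real.Gamma p := Real.Gamma_pos_of_pos hp0
  rw [← hval]
  nlinarith [hv, hint]
end

section
/- Let Φ : [m,n] → ℝ be an increasing C¹ function with Φ'(ℓ) ≠ 0 for all ℓ, and let μ > 0. Then for every ℓ ∈ [m,n], (I^{μ;Φ}_{m⁺} [M_μ((Φ(·)−Φ(m))^μ)])(ℓ) ≤ M_μ((Φ(ℓ)−Φ(m))^μ). -/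
open intervalIntegral

/-- Φ-Riemann–Liouville fractional integral of order μ with base point m. -/
noncomputable def phiFracInt (Φ : ℝ → ℝ) (m μ : ℝ) (z : ℝ → ℝ) (ℓ : ℝ) : ℝ :=
  (1 / Real.Gamma μ) * ∫ η in m..ℓ, deriv Φ η * (Φ ℓ - Φ η) ^ (μ - 1) * z η

section Aux

open Real Set Filter MeasureTheory intervalIntegral Topology


lemma gamma_lower {μ t : ℝ} (hμ : 0 < μ) (ht : 1 ≤ t) :
    Real.Gamma t * t ^ min μ 1 ≤ 2 * Real.Gamma (t + μ) := by
  have ht0 : (0:ℝ) < t := lt_of_lt_of_le one_pos ht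
  have hΓt : 0 < Real.Gamma t := Real.Gamma_pos_of_pos ht0
  have hΓtμ : 0 < Real.Gamma (t + μ) := Real.Gamma_pos_of_pos (by linarith)
  have hconv := Real.convexOn_log_Gamma
  rcases le_or_gt 1 μ with h1 | h1
  · -- μ ≥ 1 : interpolate t+1 between t and t+μ
    have hμ0 : (0:ℝ) < μ := hμ
    have hμne : μ ≠ 0 := ne_of_gt hμ0
    have key := hconv.2 (mem_Ioi.2 ht0)
      (mem_Ioi.2 (by linarith : (0:ℝ) < t + μ))
      (by rw [sub_nonneg, div_le_one hμ0]; exact h1) (by positivity)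
      (show (1 - 1/μ) + 1/μ = 1 by ring)
    have hcomb : (1 - 1/μ) • t + (1/μ) • (t + μ) = t + 1 := by
      field_simp
      rw [smul_eq_mul, smul_eq_mul, div_mul_eq_mul_div, div_mul_eq_mul_div, ← add_div,
        div_eq_iff hμne]
      ring
    rw [hcomb] at key
    simp only [Function.comp_apply, smul_eq_mul] at key
    rw [Real.Gamma_add_one (ne_of_gt ht0), Real.log_mul (ne_of_gt ht0) (ne_of_gt hΓt)] at key
    -- key : log t + log Γ t ≤ (1-1/μ) log Γ t + (1/μ) log Γ(t+μ)
    have key2 : μ * Real.log t + Real.log (Real.Gamma t) ≤ Real.log (Real.Gamma (t + μ)) := by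
      have h := mul_le_mul_of_nonneg_left key (le_of_lt hμ0)
      field_simp at h
      nlinarith [h]
    have : Real.Gamma t * t ^ μ ≤ Real.Gamma (t + μ) := by
      have hl : Real.log (Real.Gamma t * t ^ μ) ≤ Real.log (Real.Gamma (t + μ)) := by
        rw [Real.log_mul (ne_of_gt hΓt) (by positivity), Real.log_rpow ht0]
        linarith
      exact (Real.log_le_log_iff (by positivity) hΓtμ).1 hl
    have hmin : min μ 1 = 1 := min_eq_right h1
    rw [hmin, Real.rpow_one]
    have htμ : t ≤ t ^ μ := by
      calc t = t ^ (1:ℝ) := (Real.rpow_one t).symm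
        _ ≤ t ^ μ := Real.rpow_le_rpow_of_exponent_le ht h1
    nlinarith [mul_le_mul_of_nonneg_left htμ hΓt.le]
  · -- μ < 1 : interpolate t+1 between t+μ and t+μ+1
    have hmin : min μ 1 = μ := min_eq_left (le_of_lt h1)
    rw [hmin]
    have h₁ : (0:ℝ) < t + μ := by linarith
    have key := hconv.2 (mem_Ioi.2 h₁)
      (mem_Ioi.2 (by linarith : (0:ℝ) < t + μ + 1))
      (le_of_lt hμ) (by linarith : (0:ℝ) ≤ 1 - μ) (show μ + (1 - μ) = 1 by ring)
    have hcomb : μ • (t + μ) + (1 - μ) • (t + μ + 1) = t + 1 := by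
      simp only [smul_eq_mul]; ring
    rw [hcomb] at key
    simp only [Function.comp_apply, smul_eq_mul] at key
    rw [Real.Gamma_add_one (ne_of_gt ht0), Real.log_mul (ne_of_gt ht0) (ne_of_gt hΓt),
      Real.Gamma_add_one (ne_of_gt h₁),
      Real.log_mul (ne_of_gt h₁) (ne_of_gt hΓtμ)] at key
    -- key : log t + log Γ t ≤ μ log Γ(t+μ) + (1-μ)(log(t+μ) + log Γ(t+μ))
    have hlt2 : Real.log (t + μ) ≤ Real.log t + Real.log 2 := by
      rw [← Real.log_mul (ne_of_gt ht0) two_ne_zero]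
      exact Real.log_le_log (by linarith) (by linarith)
    have key2 : μ * Real.log t + Real.log (Real.Gamma t) ≤
        Real.log 2 + Real.log (Real.Gamma (t + μ)) := by
      have hlog2 : (0:ℝ) ≤ Real.log 2 := Real.log_nonneg (by norm_num)
      nlinarith [key, hlt2]
    have hl : Real.log (Real.Gamma t * t ^ μ) ≤ Real.log (2 * Real.Gamma (t + μ)) := by
      rw [Real.log_mul (ne_of_gt hΓt) (by positivity), Real.log_rpow ht0,
        Real.log_mul two_ne_zero (ne_of_gt hΓtμ)]
      linarith
    exact (Real.log_le_log_iff (by positivity) (by positivity)).1 hl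

lemma ml_summable {μ x : ℝ} (hμ : 0 < μ) (hx : 0 ≤ x) :
    Summable (fun k : ℕ => x ^ k / Real.Gamma (μ * k + 1)) := by
  rcases hx.eq_or_lt with h | hx0
  · apply summable_of_ne_finset_zero (s := {0})
    intro k hk
    simp only [Finset.mem_singleton] at hk
    rw [← h, zero_pow hk, zero_div]
  · have hν : (0:ℝ) < min μ 1 := lt_min hμ one_pos
    apply summable_of_ratio_norm_eventually_le (r := 1/2) (by norm_num)
    have htend : Tendsto (fun k : ℕ => (μ * k + 1) ^ min μ 1) atTop atTop := by
      apply (tendsto_rpow_atTop hν).comp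
      apply tendsto_atTop_add_const_right
      exact Tendsto.const_mul_atTop hμ tendsto_natCast_atTop_atTop
    filter_upwards [htend.eventually_ge_atTop (4 * x)] with k hk
    have ht1 : (1:ℝ) ≤ μ * k + 1 := by
      have : (0:ℝ) ≤ μ * k := by positivity
      linarith
    have hΓ1 : 0 < Real.Gamma (μ * k + 1) := Real.Gamma_pos_of_pos (by linarith)
    have hΓ2 : 0 < Real.Gamma (μ * (k + 1) + 1) := Real.Gamma_pos_of_pos (by positivity)
    have hstep : Real.Gamma (μ * k + 1) * (4 * x) ≤ 2 * Real.Gamma (μ * (k + 1) + 1) := by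
      have h1 := gamma_lower hμ ht1
      have h2 : Real.Gamma (μ * k + 1) * (4 * x) ≤
          Real.Gamma (μ * k + 1) * (μ * k + 1) ^ min μ 1 := by gcongr
      have h3 : μ * k + 1 + μ = μ * (k + 1) + 1 := by push_cast; ring
      rw [h3] at h1
      linarith
    rw [Real.norm_eq_abs, Real.norm_eq_abs, abs_of_pos (by positivity), abs_of_pos (by positivity)]
    push_cast
    have hR : 1/2 * (x^k / Real.Gamma (μ*k+1)) = x^k / (2 * Real.Gamma (μ*k+1)) := by ring
    rw [hR, div_le_div_iff₀ hΓ2 (by positivity), pow_succ]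
    have hkey : x * (2 * Real.Gamma (μ*k+1)) ≤ Real.Gamma (μ*(k+1)+1) := by nlinarith
    nlinarith [mul_le_mul_of_nonneg_left hkey (pow_nonneg hx k)]


lemma deriv_nonneg_of_monotoneOn {Φ : ℝ → ℝ} {m n η : ℝ}
    (hmono : MonotoneOn Φ (Set.Icc m n)) (hη : η ∈ Set.Ioo m n)
    (hd : HasDerivAt Φ (deriv Φ η) η) : 0 ≤ deriv Φ η := by
  rw [hasDerivAt_iff_tendsto_slope] at hd
  have hle : 𝓝[>] η ≤ 𝓝[≠] η := nhdsWithin_mono η fun z hz => ne_of_gt hz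
  have hd' : Tendsto (slope Φ η) (𝓝[>] η) (𝓝 (deriv Φ η)) := hd.mono_left hle
  have hev : ∀ᶠ z in 𝓝[>] η, 0 ≤ slope Φ η z := by
    filter_upwards [Ioo_mem_nhdsGT_of_mem (Set.left_mem_Ico.2 hη.2)] with z hz
    have hzI : z ∈ Set.Icc m n := ⟨le_of_lt (lt_trans hη.1 hz.1), le_of_lt hz.2⟩
    have hηI : η ∈ Set.Icc m n := ⟨le_of_lt hη.1, le_of_lt hη.2⟩
    have hmle : Φ η ≤ Φ z := hmono hηI hzI (le_of_lt hz.1)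
    rw [slope_def_field]
    have : (0:ℝ) < z - η := by linarith [hz.1]
    apply div_nonneg (by linarith) (by linarith)
  exact ge_of_tendsto hd' hev


lemma complex_beta_eq {p q : ℝ} (hp : 0 < p) (hq : 0 < q) :
    Complex.betaIntegral (p:ℂ) (q:ℂ) =
      ((∫ t in (0:ℝ)..1, t ^ (p - 1) * (1 - t) ^ (q - 1) : ℝ) : ℂ) := by
  rw [Complex.betaIntegral, ← intervalIntegral.integral_ofReal]
  apply intervalIntegral.integral_congr
  intro x hx
  rw [uIcc_of_le (by norm_num : (0:ℝ) ≤ 1)] at hx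
  obtain ⟨hx0, hx1⟩ := hx
  have h1x : (0:ℝ) ≤ 1 - x := by linarith
  show (x:ℂ) ^ ((p:ℂ) - 1) * ((1:ℂ) - (x:ℂ)) ^ ((q:ℂ) - 1)
      = ((x ^ (p - 1) * (1 - x) ^ (q - 1) : ℝ) : ℂ)
  rw [show ((p:ℂ) - 1) = ((p-1:ℝ):ℂ) by push_cast; ring,
    show ((q:ℂ) - 1) = ((q-1:ℝ):ℂ) by push_cast; ring,
    show ((1:ℂ) - (x:ℂ)) = ((1-x:ℝ):ℂ) by push_cast; ring,
    ← Complex.ofReal_cpow hx0, ← Complex.ofReal_cpow h1x]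
  push_cast
  ring

lemma realBeta_integrableOn {p q : ℝ} (hp : 0 < p) (hq : 0 < q) :
    IntegrableOn (fun t : ℝ => t ^ (p - 1) * (1 - t) ^ (q - 1)) (Ioo 0 1) := by
  have hc := Complex.betaIntegral_convergent (u := (p:ℂ)) (v := (q:ℂ))
    (by simpa using hp) (by simpa using hq)
  have h1 : IntegrableOn (fun x : ℝ => ‖(x:ℂ) ^ ((p:ℂ) - 1) * (1 - (x:ℂ)) ^ ((q:ℂ) - 1)‖)
      (Ioo 0 1) := hc.norm.1.mono_set Ioo_subset_Ioc_self
  apply (IntegrableOn.congr_fun h1 _ measurableSet_Ioo)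
  intro x hx
  obtain ⟨hx0, hx1⟩ := hx
  have h1x : (0:ℝ) < 1 - x := by linarith
  simp only [norm_mul]
  rw [show ((1:ℂ) - (x:ℂ)) = ((1 - x : ℝ) : ℂ) by push_cast; ring]
  rw [Complex.norm_cpow_eq_rpow_re_of_pos hx0, Complex.norm_cpow_eq_rpow_re_of_pos h1x]
  norm_num

lemma realBeta_value {p q : ℝ} (hp : 0 < p) (hq : 0 < q) :
    ∫ t in Ioo (0:ℝ) 1, t ^ (p - 1) * (1 - t) ^ (q - 1) =
      Real.Gamma p * Real.Gamma q / Real.Gamma (p + q) := by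
  have hβ := Complex.Gamma_mul_Gamma_eq_betaIntegral (s := (p:ℂ)) (t := (q:ℂ))
    (by simpa using hp) (by simpa using hq)
  rw [complex_beta_eq hp hq] at hβ
  rw [show ((p:ℂ) + q) = ((p + q : ℝ) : ℂ) by push_cast; ring] at hβ
  rw [Complex.Gamma_ofReal, Complex.Gamma_ofReal, Complex.Gamma_ofReal] at hβ
  have hβ' : Real.Gamma p * Real.Gamma q =
      Real.Gamma (p + q) * ∫ t in (0:ℝ)..1, t ^ (p - 1) * (1 - t) ^ (q - 1) := by
    exact_mod_cast hβ
  have hI : ∫ t in (0:ℝ)..1, t ^ (p - 1) * (1 - t) ^ (q - 1) =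
      ∫ t in Ioo (0:ℝ) 1, t ^ (p - 1) * (1 - t) ^ (q - 1) := by
    rw [intervalIntegral.integral_of_le (by norm_num : (0:ℝ) ≤ 1),
      MeasureTheory.integral_Ioc_eq_integral_Ioo]
  rw [hI] at hβ'
  have hΓ : Real.Gamma (p + q) ≠ 0 := ne_of_gt (Real.Gamma_pos_of_pos (by linarith))
  field_simp
  linarith [hβ']



section BetaAffine

variable {a b p q : ℝ}

lemma affine_img (hab : a < b) : (fun t : ℝ => (b - a) * t + a) '' Ioo 0 1 = Ioo a b := by
  rw [show (fun t : ℝ => (b - a) * t + a) = ((fun x : ℝ => x + a) ∘ fun t : ℝ => (b - a) * t)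
    from rfl, Set.image_comp, Set.image_mul_left_Ioo (by linarith : (0:ℝ) < b - a),
    Set.image_add_const_Ioo]
  norm_num

lemma affine_deriv (hab : a < b) : ∀ t ∈ Ioo (0:ℝ) 1,
    HasDerivWithinAt (fun t : ℝ => (b - a) * t + a) (b - a) (Ioo 0 1) t := by
  intro t _
  have h : HasDerivAt (fun t : ℝ => (b - a) * t + a) ((b - a) * 1) t :=
    ((hasDerivAt_id t).const_mul (b - a)).add_const a
  simpa using h.hasDerivWithinAt

lemma affine_inj (hab : a < b) : InjOn (fun t : ℝ => (b - a) * t + a) (Ioo 0 1) := by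
  intro u _ v _ h
  simp only at h
  have hba : b - a ≠ 0 := by linarith
  have := add_right_cancel h
  exact mul_left_cancel₀ hba this

lemma affine_congr (hab : a < b) (hp : 0 < p) (hq : 0 < q) :
    ∀ t ∈ Ioo (0:ℝ) 1,
      |b - a| • (((b - a) * t + a - a) ^ (p - 1) * (b - ((b - a) * t + a)) ^ (q - 1)) =
      (b - a) ^ (p + q - 1) * (t ^ (p - 1) * (1 - t) ^ (q - 1)) := by
  intro t ht
  obtain ⟨ht0, ht1⟩ := ht
  have hba : (0:ℝ) < b - a := by linarith
  rw [show (b - a) * t + a - a = (b - a) * t by ring,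
    show b - ((b - a) * t + a) = (b - a) * (1 - t) by ring,
    Real.mul_rpow hba.le ht0.le, Real.mul_rpow hba.le (by linarith : (0:ℝ) ≤ 1 - t),
    abs_of_pos hba, smul_eq_mul]
  rw [show (b - a) ^ (p + q - 1) = (b - a) ^ ((1:ℝ) + (p - 1) + (q - 1)) by ring_nf,
    Real.rpow_add hba, Real.rpow_add hba, Real.rpow_one]
  ring

lemma beta_Ioo_integrableOn (hab : a < b) (hp : 0 < p) (hq : 0 < q) :
    IntegrableOn (fun u : ℝ => (u - a) ^ (p - 1) * (b - u) ^ (q - 1)) (Ioo a b) := by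
  rw [← affine_img hab]
  rw [integrableOn_image_iff_integrableOn_abs_deriv_smul measurableSet_Ioo
    (affine_deriv hab) (affine_inj hab)]
  apply IntegrableOn.congr_fun
    (((realBeta_integrableOn hp hq).const_mul ((b - a) ^ (p + q - 1))))
    _ measurableSet_Ioo
  intro t ht
  exact ((affine_congr hab hp hq) t ht).symm

lemma beta_Ioo_value (hab : a < b) (hp : 0 < p) (hq : 0 < q) :
    ∫ u in Ioo a b, (u - a) ^ (p - 1) * (b - u) ^ (q - 1) =
      (b - a) ^ (p + q - 1) * (Real.Gamma p * Real.Gamma q / Real.Gamma (p + q)) := by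
  rw [← affine_img hab]
  rw [integral_image_eq_integral_abs_deriv_smul measurableSet_Ioo
    (affine_deriv hab) (affine_inj hab)]
  rw [setIntegral_congr_fun measurableSet_Ioo (fun t ht => affine_congr hab hp hq t ht)]
  rw [MeasureTheory.integral_const_mul, realBeta_value hp hq]

end BetaAffine

open Real Set Filter MeasureTheory intervalIntegral Topology

theorem phiFracInt_mittagLeffler_le (Φ : ℝ → ℝ) (m n μ : ℝ) (hmn : m < n)
    (hΦmono : StrictMonoOn Φ (Set.Icc m n))
    (hΦC1 : ContDiffOn ℝ 1 Φ (Set.Icc m n))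
    (hΦ' : ∀ ℓ ∈ Set.Icc m n, deriv Φ ℓ ≠ 0)
    (hμ : 0 < μ) (ℓ : ℝ) (hℓ : ℓ ∈ Set.Icc m n) :
    phiFracInt Φ m μ (fun t => mittagLeffler μ ((Φ t - Φ m) ^ μ)) ℓ ≤
      mittagLeffler μ ((Φ ℓ - Φ m) ^ μ) := by
  obtain ⟨hmℓ, hℓn⟩ := hℓ
  have hmI : m ∈ Set.Icc m n := ⟨le_refl m, hmn.le⟩
  have hℓI : ℓ ∈ Set.Icc m n := ⟨hmℓ, hℓn⟩
  set A := Φ m with hA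
  set B := Φ ℓ with hB
  have hAB' : A ≤ B := hΦmono.monotoneOn hmI hℓI hmℓ
  set x := (B - A) ^ μ with hx
  have hx0 : 0 ≤ x := Real.rpow_nonneg (by linarith) μ
  have hΓμ : 0 < Real.Gamma μ := Real.Gamma_pos_of_pos hμ
  have hRHS : 0 ≤ mittagLeffler μ x := by
    apply tsum_nonneg
    intro k
    exact div_nonneg (pow_nonneg hx0 k) (Real.Gamma_pos_of_pos (by positivity)).le
  rcases eq_or_lt_of_le hmℓ with heq | hmℓ'
  · rw [phiFracInt, ← heq, intervalIntegral.integral_same, mul_zero]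
    exact hRHS
  -- main case : m < ℓ
  have hAB : A < B := hΦmono hmI hℓI hmℓ'
  have hsub : Set.Ioo m ℓ ⊆ Set.Icc m n := fun η hη => ⟨hη.1.le, le_trans hη.2.le hℓn⟩
  have hDiffAt : ∀ η ∈ Set.Ioo m ℓ, HasDerivAt Φ (deriv Φ η) η := by
    intro η hη
    have h2 : Set.Icc m n ∈ 𝓝 η := Icc_mem_nhds hη.1 (lt_of_lt_of_le hη.2 hℓn)
    exact ((hΦC1.differentiableOn one_ne_zero η (hsub hη)).differentiableAt h2).hasDerivAt
  have hd0 : ∀ η ∈ Set.Ioo m ℓ, 0 ≤ deriv Φ η := by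
    intro η hη
    exact deriv_nonneg_of_monotoneOn hΦmono.monotoneOn
      ⟨hη.1, lt_of_lt_of_le hη.2 hℓn⟩ (hDiffAt η hη)
  have hΦlt : ∀ η ∈ Set.Ioo m ℓ, A < Φ η ∧ Φ η < B := by
    intro η hη
    exact ⟨hΦmono hmI (hsub hη) hη.1, hΦmono (hsub hη) hℓI hη.2⟩
  have hΦd : ∀ η ∈ Set.Ioo m ℓ, HasDerivWithinAt Φ (deriv Φ η) (Set.Ioo m ℓ) η :=
    fun η hη => (hDiffAt η hη).hasDerivWithinAt
  have hΦinj : Set.InjOn Φ (Set.Ioo m ℓ) := hΦmono.injOn.mono hsub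
  have himg : Φ '' Set.Ioo m ℓ = Set.Ioo A B := by
    apply Set.Subset.antisymm
    · rintro u ⟨η, hη, rfl⟩
      exact hΦlt η hη
    · exact intermediate_value_Ioo hmℓ (hΦC1.continuousOn.mono
        (fun z hz => ⟨hz.1, le_trans hz.2 hℓn⟩))
  have hpk : ∀ k : ℕ, (0:ℝ) < μ * k + 1 := fun k => by positivity
  -- the summands
  set f : ℕ → ℝ → ℝ := fun k η =>
    deriv Φ η * (B - Φ η) ^ (μ - 1) * (((Φ η - A) ^ μ) ^ k / Real.Gamma (μ * k + 1))
    with hfdef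
  set H : ℕ → ℝ → ℝ := fun k u =>
    (B - u) ^ (μ - 1) * (((u - A) ^ μ) ^ k / Real.Gamma (μ * k + 1)) with hHdef
  -- beta computation for H
  have hHcongr : ∀ k : ℕ, ∀ u ∈ Set.Ioo A B, H k u =
      ((u - A) ^ ((μ * k + 1) - 1) * (B - u) ^ (μ - 1)) * (Real.Gamma (μ * k + 1))⁻¹ := by
    intro k u hu
    have h0 : (0:ℝ) ≤ u - A := by linarith [hu.1]
    rw [hHdef]
    simp only
    rw [← Real.rpow_natCast ((u - A) ^ μ) k, ← Real.rpow_mul h0,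
      show (μ * k + 1) - 1 = μ * k by ring]
    ring
  have hHint : ∀ k : ℕ, IntegrableOn (H k) (Set.Ioo A B) := by
    intro k
    apply IntegrableOn.congr_fun
      ((beta_Ioo_integrableOn hAB (hpk k) hμ).mul_const (Real.Gamma (μ * k + 1))⁻¹)
      _ measurableSet_Ioo
    intro u hu
    exact (hHcongr k u hu).symm
  have hHval : ∀ k : ℕ, ∫ u in Set.Ioo A B, H k u =
      Real.Gamma μ * (x ^ (k + 1) / Real.Gamma (μ * (k + 1) + 1)) := by
    intro k
    rw [setIntegral_congr_fun measurableSet_Ioo (hHcongr k), MeasureTheory.integral_mul_const,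
      beta_Ioo_value hAB (hpk k) hμ]
    have hexp : (μ * k + 1) + μ - 1 = μ * ((k:ℝ) + 1) := by ring
    have hexp2 : (μ * k + 1) + μ = μ * ((k:ℝ) + 1) + 1 := by ring
    rw [hexp, hexp2]
    have hxpow : (B - A) ^ (μ * ((k:ℝ) + 1)) = x ^ (k + 1) := by
      rw [hx, ← Real.rpow_natCast ((B - A) ^ μ) (k + 1), ← Real.rpow_mul (by linarith)]
      push_cast
      ring_nf
    rw [hxpow]
    have hΓk : Real.Gamma (μ * k + 1) ≠ 0 := ne_of_gt (Real.Gamma_pos_of_pos (hpk k))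
    field_simp
  -- relate f to H
  have hfH : ∀ k : ℕ, Set.EqOn (f k) (fun η => |deriv Φ η| • H k (Φ η)) (Set.Ioo m ℓ) := by
    intro k η hη
    rw [hfdef, hHdef]
    simp only [smul_eq_mul, abs_of_nonneg (hd0 η hη)]
    ring
  have hint : ∀ k : ℕ, IntegrableOn (f k) (Set.Ioo m ℓ) := by
    intro k
    have h1 : IntegrableOn (H k) (Φ '' Set.Ioo m ℓ) := by rw [himg]; exact hHint k
    have h2 := (integrableOn_image_iff_integrableOn_abs_deriv_smul measurableSet_Ioo
      hΦd hΦinj (H k)).1 h1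
    exact IntegrableOn.congr_fun h2 (fun η hη => (hfH k hη).symm) measurableSet_Ioo
  have hval : ∀ k : ℕ, ∫ η in Set.Ioo m ℓ, f k η =
      Real.Gamma μ * (x ^ (k + 1) / Real.Gamma (μ * (k + 1) + 1)) := by
    intro k
    rw [setIntegral_congr_fun measurableSet_Ioo (hfH k),
      ← integral_image_eq_integral_abs_deriv_smul measurableSet_Ioo hΦd hΦinj, himg]
    exact hHval k
  -- nonnegativity of summands
  have hf_nonneg : ∀ k : ℕ, ∀ η ∈ Set.Ioo m ℓ, 0 ≤ f k η := by
    intro k η hη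
    rw [hfdef]
    have h1 := hd0 η hη
    have h2 : (0:ℝ) ≤ (B - Φ η) ^ (μ - 1) := Real.rpow_nonneg (by linarith [(hΦlt η hη).2]) _
    have h3 : (0:ℝ) ≤ ((Φ η - A) ^ μ) ^ k :=
      pow_nonneg (Real.rpow_nonneg (by linarith [(hΦlt η hη).1]) _) k
    have h4 := (Real.Gamma_pos_of_pos (hpk k)).le
    positivity
  -- summability
  have hsummable : Summable (fun k : ℕ => x ^ (k + 1) / Real.Gamma (μ * (k + 1) + 1)) := by
    have h := (ml_summable hμ hx0).comp_injective (add_left_injective 1)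
    apply h.congr
    intro k
    simp only [Function.comp_apply]
    push_cast
    ring_nf
  have hFk_nonneg : ∀ k : ℕ, 0 ≤ ∫ η in Set.Ioo m ℓ, f k η := by
    intro k
    rw [hval k]
    have := (Real.Gamma_pos_of_pos (show (0:ℝ) < μ * (k+1) + 1 by positivity)).le
    positivity
  have hvalsummable : Summable (fun k : ℕ => ∫ η in Set.Ioo m ℓ, f k η) :=
    (hsummable.mul_left (Real.Gamma μ)).congr fun k => (hval k).symm
  -- measurability
  have hmeas : ∀ k : ℕ, AEStronglyMeasurable (f k) (volume.restrict (Set.Ioo m ℓ)) := by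
    intro k
    have hcont : ContinuousOn (f k) (Set.Ioo m ℓ) := by
      have hΦc : ContinuousOn Φ (Set.Ioo m ℓ) := hΦC1.continuousOn.mono hsub
      have hcd : ContinuousOn (deriv Φ) (Set.Ioo m ℓ) := by
        have h1 : ContinuousOn (derivWithin Φ (Set.Icc m n)) (Set.Icc m n) :=
          hΦC1.continuousOn_derivWithin (uniqueDiffOn_Icc hmn) le_rfl
        apply (h1.mono hsub).congr
        intro η hη
        have h2 : Set.Icc m n ∈ 𝓝 η := Icc_mem_nhds hη.1 (lt_of_lt_of_le hη.2 hℓn)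
        exact ((hDiffAt η hη).differentiableAt.derivWithin
          (uniqueDiffOn_Icc hmn η (hsub hη))).symm ▸ rfl
      rw [hfdef]
      apply ContinuousOn.mul
      apply ContinuousOn.mul hcd
      · apply ContinuousOn.rpow_const (continuousOn_const.sub hΦc)
        intro η hη
        exact Or.inl (ne_of_gt (by simp only [Pi.sub_apply]; linarith [(hΦlt η hη).2]))
      · apply ContinuousOn.div_const
        apply ContinuousOn.pow
        apply ContinuousOn.rpow_const (hΦc.sub continuousOn_const)
        intro η hη
        exact Or.inl (ne_of_gt (by simp only [Pi.sub_apply]; linarith [(hΦlt η hη).1]))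
    exact hcont.aestronglyMeasurable measurableSet_Ioo
  -- the lintegral side condition
  have hlin : ∀ k : ℕ, ∫⁻ η in Set.Ioo m ℓ, ‖f k η‖₊ ∂volume =
      ENNReal.ofReal (∫ η in Set.Ioo m ℓ, f k η) := by
    intro k
    simp only [← enorm_eq_nnnorm]
    rw [← ofReal_integral_norm_eq_lintegral_enorm (hint k)]
    congr 1
    apply setIntegral_congr_fun measurableSet_Ioo
    intro η hη
    exact Real.norm_of_nonneg (hf_nonneg k η hη)
  have hne : (∑' k : ℕ, ∫⁻ η in Set.Ioo m ℓ, ‖f k η‖₊ ∂volume) ≠ ⊤ := by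
    simp_rw [hlin]
    rw [← ENNReal.ofReal_tsum_of_nonneg hFk_nonneg hvalsummable]
    exact ENNReal.ofReal_ne_top
  -- main computation
  rw [phiFracInt, intervalIntegral.integral_of_le hmℓ,
    MeasureTheory.integral_Ioc_eq_integral_Ioo]
  have hrepr : ∀ η : ℝ, deriv Φ η * (B - Φ η) ^ (μ - 1) *
      mittagLeffler μ ((Φ η - A) ^ μ) = ∑' k : ℕ, f k η := by
    intro η
    rw [mittagLeffler, hfdef]
    exact (tsum_mul_left).symm
  simp only [← hB, hrepr]
  rw [MeasureTheory.integral_tsum hmeas hne]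
  simp_rw [hval]
  rw [tsum_mul_left, ← mul_assoc, one_div, inv_mul_cancel₀ (ne_of_gt hΓμ), one_mul]
  -- final inequality
  rw [mittagLeffler, Summable.tsum_eq_zero_add (ml_summable hμ hx0)]
  have h0 : (0:ℝ) ≤ x ^ 0 / Real.Gamma (μ * (0:ℕ) + 1) := by
    have := (Real.Gamma_pos_of_pos (hpk 0)).le
    positivity
  have hshift : (∑' k : ℕ, x ^ (k + 1) / Real.Gamma (μ * (k + 1 : ℕ) + 1)) =
      ∑' k : ℕ, x ^ (k + 1) / Real.Gamma (μ * (k + 1) + 1) := by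
    apply tsum_congr
    intro k
    push_cast
    ring_nf
  rw [hshift] at *
  linarith [h0]

end Aux
end
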